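/- arXiv:2105.03825 — 9 statements merged into one kernel-verified Lean document; each statement's English description precedes it below -/
import Mathlib

section
/- Let $s_1, s_2, r$ be real numbers with $0 \le s_2 \le s_1$, $0 < r \le (s_1+s_2)/2$, and $s_1 + s_2 \ge 2$. Then for every $t$ with $-1 < t \le 1$ and every real $x \ge 0$, one has $(1+t)\sinh(rx) \le r(\sinh(s_1 x) + t\sinh(s_2 x))$. -/
open Real

-- sinh(λ u) ≤ λ sinh u for λ ∈ [0,1], u ≥ 0
lemma sinh_mul_le (l u : ℝ) (hl0 : 0 ≤ l) (hl1 : l ≤ 1) (hu : 0 ≤ u) :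
    Real.sinh (l * u) ≤ l * Real.sinh u := by
  have key : MonotoneOn (fun u => l * Real.sinh u - Real.sinh (l * u)) (Set.Ici 0) := by
    apply monotoneOn_of_deriv_nonneg (convex_Ici 0)
    · fun_prop
    · fun_prop
    · intro v hv
      simp only [interior_Ici, Set.mem_Ioi] at hv
      have hd1 : HasDerivAt (fun u : ℝ => l * u) l v := by
        simpa using (hasDerivAt_id v).const_mul l
      have hd2 : HasDerivAt (fun u => Real.sinh (l * u)) (Real.cosh (l * v) * l) v :=
        (Real.hasDerivAt_sinh (l * v)).comp v hd1
      have hd3 : HasDerivAt (fun u => l * Real.sinh u - Real.sinh (l * u))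
          (l * Real.cosh v - Real.cosh (l * v) * l) v :=
        ((Real.hasDerivAt_sinh v).const_mul l).sub hd2
      rw [hd3.deriv]
      have : Real.cosh (l * v) ≤ Real.cosh v := by
        rw [Real.cosh_le_cosh]
        rw [abs_of_nonneg (by positivity), abs_of_nonneg hv.le]
        nlinarith
      nlinarith
  have h0 := key (Set.self_mem_Ici) (Set.mem_Ici.2 hu) hu
  simp at h0
  linarith

theorem stmt_2 (s₁ s₂ r t x : ℝ) (h2 : 0 ≤ s₂) (h21 : s₂ ≤ s₁)
    (hr0 : 0 < r) (hr : r ≤ (s₁ + s₂) / 2) (hs : 2 ≤ s₁ + s₂)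
    (ht1 : -1 < t) (ht2 : t ≤ 1) (hx : 0 ≤ x) :
    (1 + t) * Real.sinh (r * x) ≤ r * (Real.sinh (s₁ * x) + t * Real.sinh (s₂ * x)) := by
  set c := (s₁ + s₂) / 2 with hc
  have hc1 : 1 ≤ c := by simp [hc]; linarith
  -- B : sinh s₂x ≤ sinh s₁x
  have hB : Real.sinh (s₂ * x) ≤ Real.sinh (s₁ * x) := by
    rw [Real.sinh_le_sinh]; nlinarith
  -- sum ≥ 2 sinh(cx)
  have hsum : 2 * Real.sinh (c * x) ≤ Real.sinh (s₁ * x) + Real.sinh (s₂ * x) := by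
    have h1 : s₁ * x = c * x + (s₁ - s₂) / 2 * x := by ring
    have h2' : s₂ * x = c * x - (s₁ - s₂) / 2 * x := by ring
    rw [h1, h2', Real.sinh_add, Real.sinh_sub]
    have hcosh : 1 ≤ Real.cosh ((s₁ - s₂) / 2 * x) := Real.one_le_cosh _
    have hsinh : 0 ≤ Real.sinh (c * x) := by
      rw [Real.sinh_nonneg_iff]; positivity
    nlinarith
  -- sinh(rx) ≤ r sinh(cx)
  have hA : Real.sinh (r * x) ≤ r * Real.sinh (c * x) := by
    have h1 : Real.sinh (r * x) = Real.sinh ((r / c) * (c * x)) := by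
      rw [div_mul_eq_mul_div, mul_div_assoc, mul_div_cancel_left₀]
      positivity
    rw [h1]
    have h3 := sinh_mul_le (r / c) (c * x) (by positivity)
      (by rw [div_le_one (by linarith)]; exact hr) (by positivity)
    have hsinh : 0 ≤ Real.sinh (c * x) := by
      rw [Real.sinh_nonneg_iff]; positivity
    calc Real.sinh ((r / c) * (c * x)) ≤ (r / c) * Real.sinh (c * x) := h3
      _ ≤ r * Real.sinh (c * x) := by
          apply mul_le_mul_of_nonneg_right _ hsinh
          rw [div_le_iff₀ (by linarith)]; nlinarith
  have k1 : 2 * Real.sinh (r * x) ≤ r * (Real.sinh (s₁ * x) + Real.sinh (s₂ * x)) := by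
    nlinarith
  have k2 : 0 ≤ r * (Real.sinh (s₁ * x) - Real.sinh (s₂ * x)) := by nlinarith
  nlinarith [mul_nonneg (by linarith : (0:ℝ) ≤ 1 + t)
      (by linarith : 0 ≤ r * (Real.sinh (s₁ * x) + Real.sinh (s₂ * x)) - 2 * Real.sinh (r * x)),
    mul_nonneg (by linarith : (0:ℝ) ≤ 1 - t) k2]
end

section
/- For all real $\nu$ with $5/16 \le \nu \le 11/16$, all $\beta$ with $1/2 \le \beta \le 1$, and all real $x$, one has $\cosh((2\nu-1)x) \le (1-\beta)\cosh(x/4) + \beta\cosh(x/2)$. -/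
theorem stmt_4 (ν β x : ℝ) (hν1 : 5/16 ≤ ν) (hν2 : ν ≤ 11/16)
    (hβ1 : 1/2 ≤ β) (hβ2 : β ≤ 1) :
    Real.cosh ((2*ν - 1) * x) ≤ (1 - β) * Real.cosh (x / 4) + β * Real.cosh (x / 2) := by
  have hx : |x/4| ≤ |x/2| := by
    rw [abs_div, abs_div]
    have := abs_nonneg x
    rw [div_le_div_iff₀ (by norm_num) (by norm_num)] <;> simp <;> linarith
  have h1 : Real.cosh ((2*ν - 1) * x) ≤ Real.cosh (3*x/8) := by
    apply Real.cosh_le_cosh.2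
    have h38 : |3*x/8| = (3/8) * |x| := by
      rw [abs_div, abs_mul]; norm_num; ring
    rw [abs_mul, h38]
    have hν : |2*ν - 1| ≤ 3/8 := abs_le.2 ⟨by linarith, by linarith⟩
    exact mul_le_mul_of_nonneg_right hν (abs_nonneg x)
  have hsum : Real.cosh (x/2) + Real.cosh (x/4) = 2 * Real.cosh (3*x/8) * Real.cosh (x/8) := by
    have ha := Real.cosh_add (3*x/8) (x/8)
    have hb := Real.cosh_sub (3*x/8) (x/8)
    have e1 : 3*x/8 + x/8 = x/2 := by ring
    have e2 : 3*x/8 - x/8 = x/4 := by ring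
    rw [e1] at ha; rw [e2] at hb
    rw [ha, hb]; ring
  have h2 : Real.cosh (3*x/8) ≤ (Real.cosh (x/4) + Real.cosh (x/2))/2 := by
    nlinarith [Real.one_le_cosh (x/8), Real.one_le_cosh (3*x/8)]
  have h3 : Real.cosh (x/4) ≤ Real.cosh (x/2) := Real.cosh_le_cosh.2 hx
  nlinarith
end

section
/- For all real $\nu$ with $9/32 \le \nu \le 23/32$, all $\beta$ with $1/2 \le \beta \le 1$, and all real $x$, one has $\cosh((2\nu-1)x) \le (1-\beta)\cosh(3x/8) + \beta\cosh(x/2)$. -/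
theorem stmt_5 (ν β x : ℝ) (hν1 : 9/32 ≤ ν) (hν2 : ν ≤ 23/32)
    (hβ1 : 1/2 ≤ β) (hβ2 : β ≤ 1) :
    Real.cosh ((2*ν - 1) * x) ≤ (1 - β) * Real.cosh (3*x/8) + β * Real.cosh (x / 2) := by
  have h1 : Real.cosh ((2*ν - 1) * x) ≤ Real.cosh (7/16 * x) := by
    rw [Real.cosh_le_cosh, abs_mul, abs_mul]
    have : |2*ν - 1| ≤ |(7:ℝ)/16| := by
      rw [abs_le]; constructor <;> [skip; skip] <;>
        simp only [abs_of_nonneg (by norm_num : (0:ℝ) ≤ 7/16)] <;> linarith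
    exact mul_le_mul_of_nonneg_right this (abs_nonneg x)
  have key : Real.cosh (3*x/8) + Real.cosh (x/2) =
      2 * Real.cosh (7/16 * x) * Real.cosh (x/16) := by
    have e1 : 3*x/8 = 7/16*x - x/16 := by ring
    have e2 : x/2 = 7/16*x + x/16 := by ring
    rw [e1, e2, Real.cosh_sub, Real.cosh_add]; ring
  have h2 : Real.cosh (7/16 * x) ≤ (Real.cosh (3*x/8) + Real.cosh (x/2)) / 2 := by
    have := Real.one_le_cosh (x/16)
    have hc := (Real.cosh_pos (7/16 * x)).le
    nlinarith [key]
  have h3 : Real.cosh (3*x/8) ≤ Real.cosh (x/2) := by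
    rw [Real.cosh_le_cosh]
    have : |3*x/8| = (3/8) * |x| := by rw [show 3*x/8 = (3/8)*x by ring, abs_mul]; norm_num
    have h2' : |x/2| = (1/2) * |x| := by rw [show x/2 = (1/2)*x by ring, abs_mul]; norm_num
    rw [this, h2']; nlinarith [abs_nonneg x]
  nlinarith [h1, h2, h3]
end

section
/- For all real $\gamma, \beta$ with $1/2 \le \gamma, \beta \le 1$ and all real $x$, one has $(1-\gamma)\cosh(x/4) + \gamma\cosh(3x/8) \le (1-\beta)\cosh(x/4) + \beta\cosh(x/2)$. -/
theorem stmt_6 (γ β x : ℝ) (hγ1 : 1/2 ≤ γ) (hγ2 : γ ≤ 1)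
    (hβ1 : 1/2 ≤ β) (hβ2 : β ≤ 1) :
    (1 - γ) * Real.cosh (x/4) + γ * Real.cosh (3*x/8) ≤
      (1 - β) * Real.cosh (x/4) + β * Real.cosh (x/2) := by
  have t := Real.exp (x/8)
  set a := Real.exp (x/8) with ha
  set b := Real.exp (-(x/8)) with hb
  have hab : a * b = 1 := by rw [ha, hb, ← Real.exp_add]; simp
  have hapos : 0 < a := Real.exp_pos _
  have hbpos : 0 < b := Real.exp_pos _
  have e1 : Real.cosh (x/4) = (a^2 + b^2)/2 := by
    rw [Real.cosh_eq, ha, hb, ← Real.exp_nat_mul, ← Real.exp_nat_mul]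
    ring_nf
  have e2 : Real.cosh (3*x/8) = (a^3 + b^3)/2 := by
    rw [Real.cosh_eq, ha, hb, ← Real.exp_nat_mul, ← Real.exp_nat_mul]
    ring_nf
  have e3 : Real.cosh (x/2) = (a^4 + b^4)/2 := by
    rw [Real.cosh_eq, ha, hb, ← Real.exp_nat_mul, ← Real.exp_nat_mul]
    ring_nf
  rw [e1, e2, e3]
  -- key facts
  have hca : (a^2+b^2)/2 ≤ (a^3+b^3)/2 := by nlinarith [sq_nonneg (a-1), sq_nonneg (b-1), sq_nonneg (a-b), mul_pos hapos hbpos]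
  have hmid : (a^3+b^3)/2 ≤ ((a^2+b^2)/2 + (a^4+b^4)/2)/2 := by
    nlinarith [mul_nonneg (sq_nonneg a) (sq_nonneg (a-1)), mul_nonneg (sq_nonneg b) (sq_nonneg (b-1))]
  nlinarith [mul_le_mul_of_nonneg_left hca (by linarith : (0:ℝ) ≤ 1-γ), sub_nonneg.mpr hca, sub_nonneg.mpr hmid, mul_le_one₀ hγ2 (by linarith) (le_refl 1)]
end

section
/- For all real $\nu$ with $1/4 < \nu < 3/4$ and all real $x$, one has $\cosh((2\nu-1)x) \le \tfrac{1}{2}\cosh(3x/4) + \tfrac{1}{2}\cosh(x/4)$. -/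
theorem stmt_7 (ν x : ℝ) (hν1 : 1/4 < ν) (hν2 : ν < 3/4) :
    Real.cosh ((2*ν - 1) * x) ≤ (1/2) * Real.cosh (3*x/4) + (1/2) * Real.cosh (x/4) := by
  have h1 : Real.cosh ((2*ν - 1) * x) ≤ Real.cosh (x/2) := by
    rw [Real.cosh_le_cosh]
    rw [abs_mul]
    have : |2*ν - 1| ≤ 1/2 := by
      rw [abs_le]; constructor <;> linarith
    calc |2*ν-1| * |x| ≤ (1/2) * |x| := by
          exact mul_le_mul_of_nonneg_right this (abs_nonneg x)
      _ = |x/2| := by rw [abs_div]; simp [abs_of_nonneg]; ring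
  have h2 : (1/2) * Real.cosh (3*x/4) + (1/2) * Real.cosh (x/4)
      = Real.cosh (x/2) * Real.cosh (x/4) := by
    have e1 : 3*x/4 = x/2 + x/4 := by ring
    have e2 : x/4 = x/2 - x/4 := by ring
    have e3 := Real.cosh_sub (x/2) (x/4)
    rw [show x/2 - x/4 = x/4 by ring] at e3
    rw [e1, Real.cosh_add]; linarith [e3]
  rw [h2]
  calc Real.cosh ((2*ν - 1) * x) ≤ Real.cosh (x/2) := h1
    _ = Real.cosh (x/2) * 1 := by ring
    _ ≤ Real.cosh (x/2) * Real.cosh (x/4) :=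
        mul_le_mul_of_nonneg_left (Real.one_le_cosh _) (Real.cosh_pos _).le
end

section
/- For every real $x \ne 0$, one has $\tfrac{1}{2}\cosh(3x/4) + \tfrac{1}{2}\cosh(x/4) \le \sinh(x)/x$, and the inequality holds with value $1$ on both sides at $x = 0$ (i.e., $x\,(\cosh(3x/4)+\cosh(x/4))/2 \le \sinh(x)$ for all $x \ge 0$). -/
lemma aux_stmt8 (x : ℝ) (hx : 0 ≤ x) :
    x * ((Real.cosh (3*x/4) + Real.cosh (x/4)) / 2) ≤ Real.sinh x := by
  obtain ⟨t, rfl⟩ : ∃ t, x = 4*t := ⟨x/4, by ring⟩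
  have ht : 0 ≤ t := by linarith
  have h1 : t ≤ Real.sinh t := Real.self_le_sinh_iff.2 ht
  have h2 : 1 ≤ Real.cosh t := Real.one_le_cosh t
  have h3 : Real.cosh t ^ 2 = Real.sinh t ^ 2 + 1 := Real.cosh_sq t
  have e1 : 3*(4*t)/4 = t + t + t := by ring
  have e2 : 4*t/4 = t := by ring
  have e3 : 4*t = t + t + (t + t) := by ring
  rw [e1, e2, e3, Real.sinh_add, Real.cosh_add, Real.cosh_add, Real.sinh_add]
  set c := Real.cosh t
  set s := Real.sinh t
  have key : 0 ≤ (s - t) * (c * (2 * s ^ 2 + 1)) := by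
    apply mul_nonneg (by linarith)
    apply mul_nonneg (by linarith) (by positivity)
  have eL : (t + t + (t + t)) * (((c*c + s*s)*c + (s*c + c*s)*s + c)/2)
      = 4*t*c*(2*s^2+1) := by linear_combination (2*t*c) * h3
  have eR : (s*c + c*s)*(c*c + s*s) + (c*c + s*s)*(s*c + c*s)
      = 4*s*c*(2*s^2+1) := by linear_combination (4*s*c) * h3
  rw [eL, eR]
  nlinarith [key]

theorem stmt_8 :
    (∀ x : ℝ, x ≠ 0 →
      (1/2) * Real.cosh (3*x/4) + (1/2) * Real.cosh (x/4) ≤ Real.sinh x / x) ∧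
    (∀ x : ℝ, 0 ≤ x →
      x * ((Real.cosh (3*x/4) + Real.cosh (x/4)) / 2) ≤ Real.sinh x) := by
  constructor
  · intro x hx
    rcases lt_or_gt_of_ne hx with h | h
    · have := aux_stmt8 (-x) (by linarith)
      rw [show 3*(-x)/4 = -(3*x/4) by ring, show (-x)/4 = -(x/4) by ring,
        Real.cosh_neg, Real.cosh_neg, Real.sinh_neg] at this
      rw [le_div_iff_of_neg h]
      nlinarith
    · rw [le_div_iff₀ h]
      have := aux_stmt8 x h.le
      nlinarith
  · intro x hx
    exact aux_stmt8 x hx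
end

section
/- For every real $x \ne 0$, $\dfrac{\sinh x}{x} \le \tfrac{1}{2}\cosh(x/2) + \tfrac{1}{4}(1+\cosh x)$; equivalently, for all $x \ge 0$, $4\sinh(x) \le x\,(2\cosh(x/2) + 1 + \cosh x)$. -/
lemma aux_sinh_le {u : ℝ} (hu : 0 ≤ u) : Real.sinh u ≤ u * Real.cosh u := by
  have hmono : MonotoneOn (fun t : ℝ => t * Real.cosh t - Real.sinh t) (Set.Ici 0) := by
    apply monotoneOn_of_deriv_nonneg (convex_Ici 0)
    · exact (Continuous.sub (continuous_id.mul Real.continuous_cosh)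
        Real.continuous_sinh).continuousOn
    · intro t ht
      exact (((hasDerivAt_id t).mul (Real.hasDerivAt_cosh t)).sub
        (Real.hasDerivAt_sinh t)).differentiableAt.differentiableWithinAt
    · intro t ht
      simp only [interior_Ici, Set.mem_Ioi] at ht
      have h : HasDerivAt (fun t : ℝ => t * Real.cosh t - Real.sinh t)
          (1 * Real.cosh t + t * Real.sinh t - Real.cosh t) t :=
        ((hasDerivAt_id t).mul (Real.hasDerivAt_cosh t)).sub (Real.hasDerivAt_sinh t)
      rw [h.deriv]
      have := Real.sinh_nonneg_iff.mpr ht.le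
      nlinarith
  have h0 : (0 : ℝ) * Real.cosh 0 - Real.sinh 0 ≤ u * Real.cosh u - Real.sinh u :=
    hmono (Set.self_mem_Ici) hu hu
  simp at h0
  linarith

lemma key (x : ℝ) (hx : 0 ≤ x) :
    4 * Real.sinh x ≤ x * (2 * Real.cosh (x/2) + 1 + Real.cosh x) := by
  set a := Real.sinh (x/4) with ha
  set b := Real.cosh (x/4) with hb
  have hb1 : 1 ≤ b := Real.one_le_cosh _
  have ha1 : a ≤ (x/4) * b := aux_sinh_le (by linarith)
  have hsh : Real.sinh (x/2) = 2 * a * b := by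
    rw [ha, hb, ← Real.sinh_two_mul]; ring_nf
  have hsq : b^2 = a^2 + 1 := by rw [ha, hb]; nlinarith [Real.cosh_sq (x/4)]
  have hch : Real.cosh (x/2) = b^2 + a^2 := by
    rw [ha, hb, ← Real.cosh_two_mul]; ring_nf
  have hsx : Real.sinh x = 2 * Real.sinh (x/2) * Real.cosh (x/2) := by
    rw [← Real.sinh_two_mul]; ring_nf
  have hcx : Real.cosh x = Real.cosh (x/2)^2 + Real.sinh (x/2)^2 := by
    rw [← Real.cosh_two_mul]; ring_nf
  rw [hsx, hcx, hsh, hch]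
  have hid : 2*(b^2+a^2) + 1 + ((b^2+a^2)^2 + (2*a*b)^2) = 4*b^2*(b^2+a^2) := by
    linear_combination (-3*b^2 - a^2 - 1) * hsq
  have h1 : 8*a*b ≤ 2*x*b^2 := by
    nlinarith [mul_le_mul_of_nonneg_right ha1 (by positivity : (0:ℝ) ≤ 8*b)]
  have hc1 : 1 ≤ b^2 + a^2 := by nlinarith
  have h2 : 16*a*b*(b^2+a^2) ≤ 4*x*b^2*(b^2+a^2) := by
    nlinarith [mul_le_mul_of_nonneg_right h1 (by linarith : (0:ℝ) ≤ 2*(b^2+a^2))]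
  nlinarith [h2, hid]

theorem stmt_9 :
    (∀ x : ℝ, x ≠ 0 →
      Real.sinh x / x ≤ (1/2) * Real.cosh (x/2) + (1/4) * (1 + Real.cosh x)) ∧
    (∀ x : ℝ, 0 ≤ x →
      4 * Real.sinh x ≤ x * (2 * Real.cosh (x/2) + 1 + Real.cosh x)) := by
  constructor
  · intro x hx
    rcases lt_or_gt_of_ne hx with hneg | hpos
    · have h := key (-x) (by linarith)
      rw [Real.sinh_neg, Real.cosh_neg, show -x/2 = -(x/2) by ring, Real.cosh_neg] at h
      rw [div_le_iff_of_neg hneg]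
      nlinarith
    · have h := key x hpos.le
      rw [div_le_iff₀ hpos]
      nlinarith
  · exact key
end

section
/- For $n \times n$ positive definite complex matrices $A, B$ and any $X \in M_n(\mathbb{C})$, if $3/8 \le \nu \le 5/8$ and $1/2 \le \beta \le 1$, then $\|\tfrac{1}{2}(A^\nu X B^{1-\nu}+A^{1-\nu}XB^\nu)\|_2 \le \|(1-\beta)A^{1/2}XB^{1/2} + \tfrac{\beta}{2}(A^{1/4}XB^{3/4}+A^{3/4}XB^{1/4})\|_2$, where $\|\cdot\|_2$ is the Hilbert–Schmidt (Frobenius) norm. -/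
open Matrix
open scoped ComplexOrder

/-- Real power of a Hermitian matrix via its spectral decomposition. -/
noncomputable def Matrix.IsHermitian.rpow {n : ℕ} {A : Matrix (Fin n) (Fin n) ℂ}
    (hA : A.IsHermitian) (ν : ℝ) : Matrix (Fin n) (Fin n) ℂ :=
  (hA.eigenvectorUnitary : Matrix (Fin n) (Fin n) ℂ) *
    Matrix.diagonal (fun i => ((hA.eigenvalues i ^ ν : ℝ) : ℂ)) *
      star (hA.eigenvectorUnitary : Matrix (Fin n) (Fin n) ℂ)

/-- The Hilbert–Schmidt (Frobenius) norm of a complex matrix. -/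
noncomputable def frobNorm {n : ℕ} (M : Matrix (Fin n) (Fin n) ℂ) : ℝ :=
  Real.sqrt (∑ i, ∑ j, ‖M i j‖ ^ 2)


lemma cosh_step (x : ℝ) {β : ℝ} (hβ1 : 1/2 ≤ β) (hβ2 : β ≤ 1) :
    Real.cosh x ≤ (1-β) + β * Real.cosh (2*x) := by
  rw [Real.cosh_two_mul]
  nlinarith [Real.one_le_cosh x, Real.cosh_sq x]

lemma scalar_exp {a b ν β : ℝ} (hν1 : 3/8 ≤ ν) (hν2 : ν ≤ 5/8) (hβ1 : 1/2 ≤ β) (hβ2 : β ≤ 1) :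
    Real.exp (ν*a+(1-ν)*b) + Real.exp ((1-ν)*a+ν*b) ≤
      2*(1-β)*Real.exp (a/2+b/2) + β*(Real.exp (a/4+3*b/4) + Real.exp (3*a/4+b/4)) := by
  have key : Real.cosh ((ν-1/2)*(a-b)) ≤ (1-β) + β * Real.cosh ((a-b)/4) := by
    calc Real.cosh ((ν-1/2)*(a-b)) ≤ Real.cosh ((a-b)/8) := by
          rw [Real.cosh_le_cosh, abs_mul]
          calc |ν-1/2| * |a-b| ≤ (1/8) * |a-b| := by
                apply mul_le_mul_of_nonneg_right _ (abs_nonneg _)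
                rw [abs_le]; constructor <;> linarith
            _ = |(a-b)/8| := by rw [abs_div]; simp [abs_of_nonneg]; ring
      _ ≤ (1-β) + β * Real.cosh (2*((a-b)/8)) := cosh_step _ hβ1 hβ2
      _ = (1-β) + β * Real.cosh ((a-b)/4) := by
          rw [show 2*((a-b)/8) = (a-b)/4 by ring]
  have h2a : Real.exp (ν*a+(1-ν)*b) = Real.exp (a/2+b/2) * Real.exp ((ν-1/2)*(a-b)) := by
    rw [← Real.exp_add]; congr 1; ring
  have h2b : Real.exp ((1-ν)*a+ν*b) = Real.exp (a/2+b/2) * Real.exp (-((ν-1/2)*(a-b))) := by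
    rw [← Real.exp_add]; congr 1; ring
  have h2 : Real.exp (ν*a+(1-ν)*b) + Real.exp ((1-ν)*a+ν*b)
      = Real.exp (a/2+b/2) * (2 * Real.cosh ((ν-1/2)*(a-b))) := by
    rw [Real.cosh_eq, h2a, h2b]; ring
  have h3 : 2*(1-β)*Real.exp (a/2+b/2) + β*(Real.exp (a/4+3*b/4) + Real.exp (3*a/4+b/4))
      = Real.exp (a/2+b/2) * (2 * ((1-β) + β * Real.cosh ((a-b)/4))) := by
    have h3a : Real.exp (a/4+3*b/4) = Real.exp (a/2+b/2) * Real.exp (-((a-b)/4)) := by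
      rw [← Real.exp_add]; congr 1; ring
    have h3b : Real.exp (3*a/4+b/4) = Real.exp (a/2+b/2) * Real.exp ((a-b)/4) := by
      rw [← Real.exp_add]; congr 1; ring
    rw [Real.cosh_eq, h3a, h3b]; ring
  rw [h2, h3]
  have := Real.exp_pos (a/2+b/2)
  nlinarith [key]

lemma scalar_rpow {l m ν β : ℝ} (hl : 0 < l) (hm : 0 < m)
    (hν1 : 3/8 ≤ ν) (hν2 : ν ≤ 5/8) (hβ1 : 1/2 ≤ β) (hβ2 : β ≤ 1) :
    (1/2) * (l^ν * m^(1-ν) + l^(1-ν) * m^ν) ≤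
      (1-β) * (l^(1/2:ℝ) * m^(1/2:ℝ)) + (β/2) * (l^(1/4:ℝ) * m^(3/4:ℝ) + l^(3/4:ℝ) * m^(1/4:ℝ)) := by
  simp only [Real.rpow_def_of_pos hl, Real.rpow_def_of_pos hm, ← Real.exp_add]
  set a := Real.log l; set b := Real.log m
  have := scalar_exp (a := a) (b := b) hν1 hν2 hβ1 hβ2
  rw [show a * ν + b * (1-ν) = ν*a+(1-ν)*b by ring,
    show a * (1-ν) + b * ν = (1-ν)*a+ν*b by ring,
    show a * (1/2) + b * (1/2) = a/2+b/2 by ring,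
    show a * (1/4) + b * (3/4) = a/4+3*b/4 by ring,
    show a * (3/4) + b * (1/4) = 3*a/4+b/4 by ring]
  linarith

lemma frob_sq {n : ℕ} (M : Matrix (Fin n) (Fin n) ℂ) :
    ∑ i, ∑ j, ‖M i j‖ ^ 2 = (Matrix.trace (Mᴴ * M)).re := by
  simp only [Matrix.trace, Matrix.diag_apply, Matrix.mul_apply, Matrix.conjTranspose_apply,
    Complex.star_def]
  have h : ∀ z : ℂ, (starRingEnd ℂ) z * z = ((‖z‖ ^ 2 : ℝ) : ℂ) := by
    intro z; rw [mul_comm, Complex.mul_conj, Complex.sq_norm]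
  simp only [h]
  rw [Finset.sum_comm]
  simp [← Complex.ofReal_pow]

lemma frob_unitary {n : ℕ} (U V : Matrix.unitaryGroup (Fin n) ℂ) (M : Matrix (Fin n) (Fin n) ℂ) :
    frobNorm ((U : Matrix (Fin n) (Fin n) ℂ) * M * star (V : Matrix (Fin n) (Fin n) ℂ)) =
      frobNorm M := by
  unfold frobNorm
  rw [frob_sq, frob_sq]
  congr 2
  have hU : star (U : Matrix (Fin n) (Fin n) ℂ) * U = 1 := UnitaryGroup.star_mul_self U
  have hV : (V : Matrix (Fin n) (Fin n) ℂ) * star (V : Matrix (Fin n) (Fin n) ℂ) = 1 :=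
    mul_eq_one_comm.mp (UnitaryGroup.star_mul_self V)
  calc (((U : Matrix (Fin n) (Fin n) ℂ) * M * star (V : Matrix (Fin n) (Fin n) ℂ))ᴴ *
          ((U : Matrix (Fin n) (Fin n) ℂ) * M * star (V : Matrix (Fin n) (Fin n) ℂ))).trace
      = ((star (V : Matrix (Fin n) (Fin n) ℂ))ᴴ * (Mᴴ * ((U : Matrix (Fin n) (Fin n) ℂ)ᴴ *
          ((U : Matrix (Fin n) (Fin n) ℂ) * (M * star (V : Matrix (Fin n) (Fin n) ℂ)))))).trace := by
        simp only [conjTranspose_mul, Matrix.mul_assoc]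
    _ = ((star (V : Matrix (Fin n) (Fin n) ℂ))ᴴ * (Mᴴ * (M * star (V : Matrix (Fin n) (Fin n) ℂ)))).trace := by
        rw [← Matrix.star_eq_conjTranspose (U : Matrix (Fin n) (Fin n) ℂ), ← Matrix.mul_assoc (star _) _ _, hU, Matrix.one_mul]
    _ = (Mᴴ * M).trace := by
        rw [← Matrix.mul_assoc, ← Matrix.mul_assoc, Matrix.trace_mul_cycle,
          ← Matrix.star_eq_conjTranspose (star (V : Matrix (Fin n) (Fin n) ℂ)), star_star,
          ← Matrix.mul_assoc, UnitaryGroup.star_mul_self, Matrix.one_mul]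

theorem stmt_13 {n : ℕ} (A B X : Matrix (Fin n) (Fin n) ℂ)
    (hA : A.PosDef) (hB : B.PosDef) (ν β : ℝ)
    (hν1 : 3/8 ≤ ν) (hν2 : ν ≤ 5/8) (hβ1 : 1/2 ≤ β) (hβ2 : β ≤ 1) :
    frobNorm ((1/2 : ℂ) •
        (hA.1.rpow ν * X * hB.1.rpow (1 - ν) + hA.1.rpow (1 - ν) * X * hB.1.rpow ν)) ≤
      frobNorm (((1 - β : ℝ) : ℂ) • (hA.1.rpow (1/2) * X * hB.1.rpow (1/2)) +
        ((β/2 : ℝ) : ℂ) •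
          (hA.1.rpow (1/4) * X * hB.1.rpow (3/4) + hA.1.rpow (3/4) * X * hB.1.rpow (1/4))) := by

  set U := hA.1.eigenvectorUnitary with hUdef
  set V := hB.1.eigenvectorUnitary with hVdef
  set Y := star (U : Matrix (Fin n) (Fin n) ℂ) * X * (V : Matrix (Fin n) (Fin n) ℂ) with hYdef
  set lam := hA.1.eigenvalues with hlamdef
  set mu := hB.1.eigenvalues with hmudef
  have factor : ∀ s t : ℝ, hA.1.rpow s * X * hB.1.rpow t =
      (U : Matrix (Fin n) (Fin n) ℂ) *
        (Matrix.diagonal (fun i => ((lam i ^ s : ℝ) : ℂ)) * Y *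
          Matrix.diagonal (fun j => ((mu j ^ t : ℝ) : ℂ))) *
        star (V : Matrix (Fin n) (Fin n) ℂ) := by
    intro s t
    simp only [Matrix.IsHermitian.rpow, hYdef, ← hUdef, ← hVdef, ← hlamdef, ← hmudef,
      Matrix.mul_assoc]
  have hL : (1/2 : ℂ) •
        (hA.1.rpow ν * X * hB.1.rpow (1 - ν) + hA.1.rpow (1 - ν) * X * hB.1.rpow ν) =
      (U : Matrix (Fin n) (Fin n) ℂ) *
        ((1/2 : ℂ) • (Matrix.diagonal (fun i => ((lam i ^ ν : ℝ) : ℂ)) * Y *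
            Matrix.diagonal (fun j => ((mu j ^ (1-ν) : ℝ) : ℂ)) +
          Matrix.diagonal (fun i => ((lam i ^ (1-ν) : ℝ) : ℂ)) * Y *
            Matrix.diagonal (fun j => ((mu j ^ ν : ℝ) : ℂ)))) *
        star (V : Matrix (Fin n) (Fin n) ℂ) := by
    rw [factor, factor]
    simp only [Matrix.mul_smul, Matrix.smul_mul, Matrix.mul_add, Matrix.add_mul]
  have hR : ((1 - β : ℝ) : ℂ) • (hA.1.rpow (1/2) * X * hB.1.rpow (1/2)) +
        ((β/2 : ℝ) : ℂ) •
          (hA.1.rpow (1/4) * X * hB.1.rpow (3/4) + hA.1.rpow (3/4) * X * hB.1.rpow (1/4)) =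
      (U : Matrix (Fin n) (Fin n) ℂ) *
        (((1 - β : ℝ) : ℂ) • (Matrix.diagonal (fun i => ((lam i ^ (1/2:ℝ) : ℝ) : ℂ)) * Y *
            Matrix.diagonal (fun j => ((mu j ^ (1/2:ℝ) : ℝ) : ℂ))) +
          ((β/2 : ℝ) : ℂ) • (Matrix.diagonal (fun i => ((lam i ^ (1/4:ℝ) : ℝ) : ℂ)) * Y *
              Matrix.diagonal (fun j => ((mu j ^ (3/4:ℝ) : ℝ) : ℂ)) +
            Matrix.diagonal (fun i => ((lam i ^ (3/4:ℝ) : ℝ) : ℂ)) * Y *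
              Matrix.diagonal (fun j => ((mu j ^ (1/4:ℝ) : ℝ) : ℂ)))) *
        star (V : Matrix (Fin n) (Fin n) ℂ) := by
    rw [factor, factor, factor]
    simp only [Matrix.mul_smul, Matrix.smul_mul, Matrix.mul_add, Matrix.add_mul]
  rw [hL, hR, frob_unitary, frob_unitary]
  unfold frobNorm
  apply Real.sqrt_le_sqrt
  apply Finset.sum_le_sum; intro i _
  apply Finset.sum_le_sum; intro j _
  have hl : 0 < lam i := hA.eigenvalues_pos i
  have hm : 0 < mu j := hB.eigenvalues_pos j
  simp only [Matrix.smul_apply, Matrix.add_apply, Matrix.mul_diagonal, Matrix.diagonal_mul,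
    smul_eq_mul]
  set y := Y i j
  have hcl : (1/2 : ℂ) * (((lam i ^ ν : ℝ) : ℂ) * y * ((mu j ^ (1-ν) : ℝ) : ℂ) +
        ((lam i ^ (1-ν) : ℝ) : ℂ) * y * ((mu j ^ ν : ℝ) : ℂ)) =
      (((1/2) * (lam i ^ ν * mu j ^ (1-ν) + lam i ^ (1-ν) * mu j ^ ν) : ℝ) : ℂ) * y := by
    push_cast; ring
  have hcr : ((1 - β : ℝ) : ℂ) * (((lam i ^ (1/2:ℝ) : ℝ) : ℂ) * y * ((mu j ^ (1/2:ℝ) : ℝ) : ℂ)) +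
        ((β/2 : ℝ) : ℂ) * (((lam i ^ (1/4:ℝ) : ℝ) : ℂ) * y * ((mu j ^ (3/4:ℝ) : ℝ) : ℂ) +
          ((lam i ^ (3/4:ℝ) : ℝ) : ℂ) * y * ((mu j ^ (1/4:ℝ) : ℝ) : ℂ)) =
      (((1-β) * (lam i ^ (1/2:ℝ) * mu j ^ (1/2:ℝ)) +
        (β/2) * (lam i ^ (1/4:ℝ) * mu j ^ (3/4:ℝ) + lam i ^ (3/4:ℝ) * mu j ^ (1/4:ℝ)) : ℝ) : ℂ) * y := by
    push_cast; ring
  rw [hcl, hcr, norm_mul, norm_mul, Complex.norm_real, Complex.norm_real, Real.norm_eq_abs, Real.norm_eq_abs]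
  have hc1 : (0:ℝ) ≤ (1/2) * (lam i ^ ν * mu j ^ (1-ν) + lam i ^ (1-ν) * mu j ^ ν) := by
    positivity
  have h1β : (0:ℝ) ≤ 1 - β := by linarith
  have hc2 : (0:ℝ) ≤ (1-β) * (lam i ^ (1/2:ℝ) * mu j ^ (1/2:ℝ)) +
      (β/2) * (lam i ^ (1/4:ℝ) * mu j ^ (3/4:ℝ) + lam i ^ (3/4:ℝ) * mu j ^ (1/4:ℝ)) := by
    apply add_nonneg
    · exact mul_nonneg h1β (by positivity)
    · exact mul_nonneg (by linarith) (by positivity)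
  rw [abs_of_nonneg hc1, abs_of_nonneg hc2]
  have key := scalar_rpow hl hm hν1 hν2 hβ1 hβ2
  exact pow_le_pow_left₀ (by positivity)
    (mul_le_mul_of_nonneg_right key (norm_nonneg y)) 2
end

section
/- For $n \times n$ positive definite complex matrices $A, B$, any $X \in M_n(\mathbb{C})$, any $\nu$ with $1/4 \le \nu \le 3/4$, and any $\alpha \ge 1/2$, one has $\|\tfrac{1}{2}(A^\nu XB^{1-\nu}+A^{1-\nu}XB^\nu)\|_2 \le \|(1-\alpha)A^{1/2}XB^{1/2}+\tfrac{\alpha}{2}(AX+XB)\|_2$. -/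
open Matrix
open scoped ComplexOrder

/- ## Auxiliary scalar lemmas -/

lemma heinz_mid (a b : ℝ) (ha : 0 < a) (hb : 0 < b) (hba : b ≤ a) {ν : ℝ}
    (hν1 : 1/4 ≤ ν) (hν2 : ν ≤ 3/4) :
    a^ν*b^(1-ν) + a^(1-ν)*b^ν ≤ a^((3:ℝ)/4)*b^((1:ℝ)/4) + a^((1:ℝ)/4)*b^((3:ℝ)/4) := by
  set t := a / b with ht_def
  have htpos : 0 < t := div_pos ha hb
  have ht : 1 ≤ t := (one_le_div hb).2 hba
  have key : ∀ s : ℝ, a^(1/2+s) * b^(1/2-s) = (a^((1:ℝ)/2)*b^((1:ℝ)/2)) * t^s := by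
    intro s
    rw [ht_def, Real.div_rpow ha.le hb.le, Real.rpow_add ha, Real.rpow_sub hb]
    field_simp
  have e1 : a^ν*b^(1-ν) = (a^((1:ℝ)/2)*b^((1:ℝ)/2)) * t^(ν-1/2) := by
    rw [← key]; congr 1 <;> congr 1 <;> ring
  have e2 : a^(1-ν)*b^ν = (a^((1:ℝ)/2)*b^((1:ℝ)/2)) * t^(-(ν-1/2)) := by
    rw [← key]; congr 1 <;> congr 1 <;> ring
  have e3 : a^((3:ℝ)/4)*b^((1:ℝ)/4) = (a^((1:ℝ)/2)*b^((1:ℝ)/2)) * t^((1:ℝ)/4) := by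
    rw [← key]; congr 1 <;> congr 1 <;> norm_num
  have e4 : a^((1:ℝ)/4)*b^((3:ℝ)/4) = (a^((1:ℝ)/2)*b^((1:ℝ)/2)) * t^(-((1:ℝ)/4)) := by
    rw [← key]; congr 1 <;> congr 1 <;> norm_num
  rw [e1, e2, e3, e4, ← mul_add, ← mul_add]
  have hc : 0 ≤ a^((1:ℝ)/2)*b^((1:ℝ)/2) :=
    mul_nonneg (Real.rpow_nonneg ha.le _) (Real.rpow_nonneg hb.le _)
  apply mul_le_mul_of_nonneg_left _ hc
  set w := t^(ν-1/2) with hw_def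
  set w' := t^(-(ν-1/2)) with hw'_def
  set R := t^((1:ℝ)/4) with hR_def
  set R' := t^(-((1:ℝ)/4)) with hR'_def
  have hww' : w * w' = 1 := by
    rw [hw_def, hw'_def, ← Real.rpow_add htpos]; simp
  have hRR' : R * R' = 1 := by
    rw [hR_def, hR'_def, ← Real.rpow_add htpos]; simp
  have hwR : w ≤ R := Real.rpow_le_rpow_of_exponent_le ht (by linarith)
  have hR'w : R' ≤ w := Real.rpow_le_rpow_of_exponent_le ht (by linarith)
  have hwpos : 0 < w := Real.rpow_pos_of_pos htpos _
  nlinarith [mul_nonneg (sub_nonneg.2 hwR) (sub_nonneg.2 hR'w), hwpos]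

lemma sqrt_mid (a b : ℝ) (ha : 0 < a) (hb : 0 < b) :
    a^((3:ℝ)/4)*b^((1:ℝ)/4) + a^((1:ℝ)/4)*b^((3:ℝ)/4) ≤ a^((1:ℝ)/2)*b^((1:ℝ)/2) + (a+b)/2 := by
  set p := a^((1:ℝ)/4) with hp_def
  set q := b^((1:ℝ)/4) with hq_def
  have hp : 0 < p := Real.rpow_pos_of_pos ha _
  have hq : 0 < q := Real.rpow_pos_of_pos hb _
  have ea : a = p^4 := by
    rw [hp_def, ← Real.rpow_natCast (a^((1:ℝ)/4)) 4, ← Real.rpow_mul ha.le]; norm_num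
  have eb : b = q^4 := by
    rw [hq_def, ← Real.rpow_natCast (b^((1:ℝ)/4)) 4, ← Real.rpow_mul hb.le]; norm_num
  have e34a : a^((3:ℝ)/4) = p^3 := by
    rw [hp_def, ← Real.rpow_natCast (a^((1:ℝ)/4)) 3, ← Real.rpow_mul ha.le]; norm_num
  have e34b : b^((3:ℝ)/4) = q^3 := by
    rw [hq_def, ← Real.rpow_natCast (b^((1:ℝ)/4)) 3, ← Real.rpow_mul hb.le]; norm_num
  have e12a : a^((1:ℝ)/2) = p^2 := by
    rw [hp_def, ← Real.rpow_natCast (a^((1:ℝ)/4)) 2, ← Real.rpow_mul ha.le]; norm_num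
  have e12b : b^((1:ℝ)/2) = q^2 := by
    rw [hq_def, ← Real.rpow_natCast (b^((1:ℝ)/4)) 2, ← Real.rpow_mul hb.le]; norm_num
  rw [e34a, e34b, e12a, e12b]
  rw [ea, eb]
  nlinarith [mul_nonneg (add_nonneg (sq_nonneg p) (sq_nonneg q)) (sq_nonneg (p-q))]

/-- The scalar Heinz–Heron inequality. -/
lemma scalar_HH (a b : ℝ) (ha : 0 < a) (hb : 0 < b) {ν α : ℝ}
    (hν1 : 1/4 ≤ ν) (hν2 : ν ≤ 3/4) (hα : 1/2 ≤ α) :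
    (a^ν*b^(1-ν) + a^(1-ν)*b^ν)/2 ≤ (1-α)*(a^((1:ℝ)/2)*b^((1:ℝ)/2)) + α/2*(a+b) := by
  have hmid : a^ν*b^(1-ν) + a^(1-ν)*b^ν ≤ a^((3:ℝ)/4)*b^((1:ℝ)/4) + a^((1:ℝ)/4)*b^((3:ℝ)/4) := by
    rcases le_total b a with h | h
    · exact heinz_mid a b ha hb h hν1 hν2
    · have h2 := heinz_mid b a hb ha h (ν := 1-ν) (by linarith) (by linarith)
      rw [show (1:ℝ)-(1-ν) = ν from by ring] at h2
      linarith
  have hmid2 := sqrt_mid a b ha hb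
  have hg : a^((1:ℝ)/2)*b^((1:ℝ)/2) ≤ (a+b)/2 := by
    have e1 : (a^((1:ℝ)/2))^2 = a := by
      rw [← Real.rpow_natCast (a^((1:ℝ)/2)) 2, ← Real.rpow_mul ha.le]; norm_num
    have e2 : (b^((1:ℝ)/2))^2 = b := by
      rw [← Real.rpow_natCast (b^((1:ℝ)/2)) 2, ← Real.rpow_mul hb.le]; norm_num
    nlinarith [sq_nonneg (a^((1:ℝ)/2) - b^((1:ℝ)/2))]
  nlinarith [mul_nonneg (by linarith : (0:ℝ) ≤ α - 1/2)
    (by linarith : (0:ℝ) ≤ (a+b)/2 - a^((1:ℝ)/2)*b^((1:ℝ)/2))]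

/- ## Auxiliary matrix lemmas -/

lemma frob_sum_eq {n : ℕ} (M : Matrix (Fin n) (Fin n) ℂ) :
    (∑ i, ∑ j, ‖M i j‖ ^ 2) = (Matrix.trace (Mᴴ * M)).re := by
  rw [Matrix.trace]
  rw [Complex.re_sum]
  rw [Finset.sum_comm]
  refine Finset.sum_congr rfl fun i _ => ?_
  rw [show ((Mᴴ * M).diag i) = ∑ k, (starRingEnd ℂ) (M k i) * M k i from by
    simp [Matrix.diag, Matrix.mul_apply, Matrix.conjTranspose_apply]]
  rw [Complex.re_sum]
  refine Finset.sum_congr rfl fun k _ => ?_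
  rw [Complex.sq_norm]
  rw [Complex.normSq_apply, Complex.mul_re]
  simp [Complex.conj_re, Complex.conj_im]
  try ring

lemma frob_conj {n : ℕ} (U V M : Matrix (Fin n) (Fin n) ℂ)
    (hU : Uᴴ * U = 1) (hV : Vᴴ * V = 1) :
    (∑ i, ∑ j, ‖(U * M * Vᴴ) i j‖ ^ 2) = ∑ i, ∑ j, ‖M i j‖ ^ 2 := by
  rw [frob_sum_eq, frob_sum_eq]
  congr 1
  have : (U * M * Vᴴ)ᴴ * (U * M * Vᴴ) = V * (Mᴴ * M) * Vᴴ := by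
    simp only [Matrix.conjTranspose_mul, Matrix.conjTranspose_conjTranspose]
    rw [show V * (Mᴴ * Uᴴ) * (U * M * Vᴴ) = V * (Mᴴ * ((Uᴴ * U) * (M * Vᴴ))) from by
      simp only [Matrix.mul_assoc], hU, Matrix.one_mul]
    simp only [Matrix.mul_assoc]
  rw [this, Matrix.trace_mul_cycle, ← Matrix.mul_assoc, hV, Matrix.one_mul]

theorem stmt_14 {n : ℕ} (A B X : Matrix (Fin n) (Fin n) ℂ)
    (hA : A.PosDef) (hB : B.PosDef) (ν α : ℝ)
    (hν1 : 1/4 ≤ ν) (hν2 : ν ≤ 3/4) (hα : 1/2 ≤ α) :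
    frobNorm ((1/2 : ℂ) •
        (hA.1.rpow ν * X * hB.1.rpow (1 - ν) + hA.1.rpow (1 - ν) * X * hB.1.rpow ν)) ≤
      frobNorm (((1 - α : ℝ) : ℂ) • (hA.1.rpow (1/2) * X * hB.1.rpow (1/2)) +
        ((α/2 : ℝ) : ℂ) • (A * X + X * B)) := by
  classical
  set D := hA.1.eigenvalues with hD_def
  set E := hB.1.eigenvalues with hE_def
  have hDpos : ∀ i, 0 < D i := hA.eigenvalues_pos
  have hEpos : ∀ j, 0 < E j := hB.eigenvalues_pos
  set U := (hA.1.eigenvectorUnitary : Matrix (Fin n) (Fin n) ℂ) with hU_def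
  set V := (hB.1.eigenvectorUnitary : Matrix (Fin n) (Fin n) ℂ) with hV_def
  have hU1 : Uᴴ * U = 1 := by
    rw [hU_def]
    simpa [Matrix.star_eq_conjTranspose] using
      Matrix.mem_unitaryGroup_iff'.mp hA.1.eigenvectorUnitary.2
  have hU2 : U * Uᴴ = 1 := by
    rw [hU_def]
    simpa [Matrix.star_eq_conjTranspose] using
      Matrix.mem_unitaryGroup_iff.mp hA.1.eigenvectorUnitary.2
  have hV1 : Vᴴ * V = 1 := by
    rw [hV_def]
    simpa [Matrix.star_eq_conjTranspose] using
      Matrix.mem_unitaryGroup_iff'.mp hB.1.eigenvectorUnitary.2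
  have hV2 : V * Vᴴ = 1 := by
    rw [hV_def]
    simpa [Matrix.star_eq_conjTranspose] using
      Matrix.mem_unitaryGroup_iff.mp hB.1.eigenvectorUnitary.2
  set Y := Uᴴ * X * V with hY_def
  have hrpA : ∀ s : ℝ, hA.1.rpow s = U * diagonal (fun i => ((D i ^ s : ℝ) : ℂ)) * Uᴴ := by
    intro s; rw [hU_def, hD_def]; rfl
  have hrpB : ∀ s : ℝ, hB.1.rpow s = V * diagonal (fun j => ((E j ^ s : ℝ) : ℂ)) * Vᴴ := by
    intro s; rw [hV_def, hE_def]; rfl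
  have hterm : ∀ f g : Fin n → ℂ,
      (U * diagonal f * Uᴴ) * X * (V * diagonal g * Vᴴ) =
        U * (diagonal f * Y * diagonal g) * Vᴴ := by
    intro f g
    rw [hY_def]
    simp only [Matrix.mul_assoc]
  have hAX : A * X = U * (diagonal (fun i => ((D i : ℝ) : ℂ)) * Y) * Vᴴ := by
    conv_lhs => rw [hA.1.spectral_theorem]
    rw [hY_def]
    simp only [Matrix.mul_assoc]
    rw [hV2, Matrix.mul_one]
    rw [Unitary.conjStarAlgAut_apply]
    simp only [Matrix.mul_assoc]
    rfl
  have hXB : X * B = U * (Y * diagonal (fun j => ((E j : ℝ) : ℂ))) * Vᴴ := by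
    have hB' : B = V * diagonal (fun j => ((E j : ℝ) : ℂ)) * Vᴴ := by
      rw [hV_def, hE_def]; conv_lhs => rw [hB.1.spectral_theorem]
      rw [Unitary.conjStarAlgAut_apply]; rfl
    rw [hB', hY_def]
    rw [show U * (Uᴴ * X * V * diagonal (fun j => ((E j : ℝ) : ℂ))) * Vᴴ
        = (U * Uᴴ) * (X * (V * (diagonal (fun j => ((E j : ℝ) : ℂ)) * Vᴴ))) from by
      simp only [Matrix.mul_assoc], hU2, Matrix.one_mul]
    simp only [Matrix.mul_assoc]
  -- abbreviations for the diagonal coefficient matrices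
  set WL : Matrix (Fin n) (Fin n) ℂ := (1/2 : ℂ) •
      (diagonal (fun i => ((D i ^ ν : ℝ) : ℂ)) * Y * diagonal (fun j => ((E j ^ (1-ν) : ℝ) : ℂ)) +
       diagonal (fun i => ((D i ^ (1-ν) : ℝ) : ℂ)) * Y * diagonal (fun j => ((E j ^ ν : ℝ) : ℂ)))
    with hWL_def
  set WR : Matrix (Fin n) (Fin n) ℂ := ((1 - α : ℝ) : ℂ) •
      (diagonal (fun i => ((D i ^ (1/2 : ℝ) : ℝ) : ℂ)) * Y *
        diagonal (fun j => ((E j ^ (1/2 : ℝ) : ℝ) : ℂ))) +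
      ((α/2 : ℝ) : ℂ) • (diagonal (fun i => ((D i : ℝ) : ℂ)) * Y +
        Y * diagonal (fun j => ((E j : ℝ) : ℂ))) with hWR_def
  have hLmat : (1/2 : ℂ) •
      (hA.1.rpow ν * X * hB.1.rpow (1 - ν) + hA.1.rpow (1 - ν) * X * hB.1.rpow ν) =
      U * WL * Vᴴ := by
    rw [hrpA ν, hrpA (1-ν), hrpB (1-ν), hrpB ν, hterm, hterm, hWL_def]
    simp only [Matrix.mul_add, Matrix.add_mul, Matrix.smul_mul, Matrix.mul_smul]
  have hRmat : ((1 - α : ℝ) : ℂ) • (hA.1.rpow (1/2) * X * hB.1.rpow (1/2)) +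
      ((α/2 : ℝ) : ℂ) • (A * X + X * B) = U * WR * Vᴴ := by
    rw [hrpA (1/2), hrpB (1/2), hterm, hAX, hXB, hWR_def]
    simp only [Matrix.mul_add, Matrix.add_mul, Matrix.smul_mul, Matrix.mul_smul]
  rw [hLmat, hRmat, frobNorm, frobNorm,
    frob_conj U V WL hU1 hV1, frob_conj U V WR hU1 hV1]
  apply Real.sqrt_le_sqrt
  apply Finset.sum_le_sum
  intro i _
  apply Finset.sum_le_sum
  intro j _
  -- entrywise comparison
  have hEntryL : WL i j =
      (((D i ^ ν * E j ^ (1-ν) + D i ^ (1-ν) * E j ^ ν)/2 : ℝ) : ℂ) * Y i j := by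
    rw [hWL_def]
    simp only [Matrix.smul_apply, Matrix.add_apply, Matrix.mul_diagonal,
      Matrix.diagonal_mul, smul_eq_mul]
    push_cast
    ring
  have hEntryR : WR i j =
      (((1 - α) * (D i ^ ((1:ℝ)/2) * E j ^ ((1:ℝ)/2)) + α/2 * (D i + E j) : ℝ) : ℂ) * Y i j := by
    rw [hWR_def]
    simp only [Matrix.smul_apply, Matrix.add_apply, Matrix.mul_diagonal,
      Matrix.diagonal_mul, smul_eq_mul]
    push_cast
    ring
  rw [hEntryL, hEntryR]
  simp only [norm_mul, Complex.norm_real, Real.norm_eq_abs]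
  have hcL : (0:ℝ) ≤ (D i ^ ν * E j ^ (1-ν) + D i ^ (1-ν) * E j ^ ν)/2 := by
    have := Real.rpow_pos_of_pos (hDpos i) ν
    have := Real.rpow_pos_of_pos (hDpos i) (1-ν)
    have := Real.rpow_pos_of_pos (hEpos j) ν
    have := Real.rpow_pos_of_pos (hEpos j) (1-ν)
    positivity
  have hLR := scalar_HH (D i) (E j) (hDpos i) (hEpos j) hν1 hν2 hα
  have habs : |(D i ^ ν * E j ^ (1-ν) + D i ^ (1-ν) * E j ^ ν)/2| ≤
      |(1 - α) * (D i ^ ((1:ℝ)/2) * E j ^ ((1:ℝ)/2)) + α/2 * (D i + E j)| := by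
    rw [abs_of_nonneg hcL, abs_of_nonneg (le_trans hcL hLR)]
    exact hLR
  have h1 : |(D i ^ ν * E j ^ (1-ν) + D i ^ (1-ν) * E j ^ ν)/2| * ‖Y i j‖ ≤
      |(1 - α) * (D i ^ ((1:ℝ)/2) * E j ^ ((1:ℝ)/2)) + α/2 * (D i + E j)| *
        ‖Y i j‖ :=
    mul_le_mul_of_nonneg_right habs (norm_nonneg _)
  exact pow_le_pow_left₀ (mul_nonneg (abs_nonneg _) (norm_nonneg _)) h1 2
end
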